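/- Let p be an odd prime. The subgroup of the symmetric group on F_p generated by the permutations x ↦ x + 1, x ↦ -x, and x ↦ x^(p-2) is the full symmetric group on F_p. -/

import Mathlib

theorem stmt_14 (p : ℕ) (hp : p.Prime) (hodd : Odd p)
    (σ ν δ : Equiv.Perm (ZMod p)) (hσ : ∀ x, σ x = x + 1)
    (hν : ∀ x, ν x = -x) (hδ : ∀ x, δ x = x ^ (p - 2)) :
    Subgroup.closure {σ, ν, δ} = (⊤ : Subgroup (Equiv.Perm (ZMod p))) := by
  haveI : Fact p.Prime := ⟨hp⟩
  have hp3 : 3 ≤ p := by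
    have h2 := hp.two_le
    have : p ≠ 2 := by rintro rfl; exact absurd hodd (by decide)
    omega
  -- δ is inversion
  have hδ' : ∀ x : ZMod p, δ x = x⁻¹ := by
    intro x
    rw [hδ]
    rcases eq_or_ne x 0 with rfl | hx
    · rw [zero_pow (by omega), inv_zero]
    · have h1 : x ^ (p - 1) = 1 := ZMod.pow_card_sub_one_eq_one hx
      have : x ^ (p - 2) * x = 1 := by
        rw [← pow_succ]
        have : p - 2 + 1 = p - 1 := by omega
        rw [this, h1]
      field_simp
      linear_combination this
  -- σ⁻¹ subtracts one
  have hσ' : ∀ x : ZMod p, σ⁻¹ x = x - 1 := by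
    intro x
    rw [Equiv.Perm.inv_eq_iff_eq, hσ]
    ring
  -- powers of σ
  have hσpow : ∀ (n : ℕ) (x : ZMod p), (σ ^ n) x = x + n := by
    intro n
    induction n with
    | zero => simp
    | succ n ih =>
      intro x
      rw [pow_succ, Equiv.Perm.mul_apply, ih, hσ]
      push_cast
      ring
  have h10 : (1 : ZMod p) ≠ 0 := one_ne_zero
  -- σ is a cycle with full support
  have hcyc : σ.IsCycle := by
    refine ⟨0, by rw [hσ]; simpa using h10, fun y _ => ?_⟩
    exact ⟨(y.val : ℤ), by rw [zpow_natCast, hσpow, zero_add]; exact ZMod.natCast_zmod_val y⟩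
  have hsupp : σ.support = Finset.univ := by
    ext x
    simp only [Equiv.Perm.mem_support, Finset.mem_univ, iff_true, hσ]
    intro h
    exact h10 (by linear_combination h)
  -- the key transposition
  set τ : Equiv.Perm (ZMod p) := σ * ν * δ * σ * δ * σ⁻¹ * δ with hτdef
  have hτ : τ = Equiv.swap (0 : ZMod p) 1 := by
    ext x
    simp only [hτdef, Equiv.Perm.mul_apply]
    rcases eq_or_ne x 0 with rfl | hx0
    · rw [hδ' 0, inv_zero, hσ', hδ', hσ, hδ', hν, hσ]
      norm_num [Equiv.swap_apply_left]
    rcases eq_or_ne x 1 with rfl | hx1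
    · rw [hδ' 1, inv_one, hσ', hδ', hσ, hδ', hν, hσ]
      norm_num [Equiv.swap_apply_right]
    · rw [Equiv.swap_apply_of_ne_of_ne hx0 hx1]
      rw [hδ', hσ', hδ', hσ, hδ', hν, hσ]
      have hxinv : x⁻¹ ≠ 0 := inv_ne_zero hx0
      have h2 : x⁻¹ - 1 ≠ 0 := by
        intro h
        exact hx1 (by field_simp at h; linear_combination -h)
      have h1x : (1 : ZMod p) - x ≠ 0 := sub_ne_zero.mpr (Ne.symm hx1)
      have key : ((x⁻¹ - 1)⁻¹ + 1) = (1 - x)⁻¹ := by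
        field_simp
        ring
      rw [key, inv_inv]
      ring
  -- conclude
  have hmem : τ ∈ Subgroup.closure {σ, ν, δ} := by
    have hσm : σ ∈ Subgroup.closure {σ, ν, δ} := Subgroup.subset_closure (by simp)
    have hνm : ν ∈ Subgroup.closure {σ, ν, δ} := Subgroup.subset_closure (by simp)
    have hδm : δ ∈ Subgroup.closure {σ, ν, δ} := Subgroup.subset_closure (by simp)
    exact mul_mem (mul_mem (mul_mem (mul_mem (mul_mem (mul_mem hσm hνm) hδm) hσm) hδm)
      (inv_mem hσm)) hδm
  have hcard : (Fintype.card (ZMod p)).Prime := by rwa [ZMod.card]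
  have htop : Subgroup.closure {σ, τ} = (⊤ : Subgroup (Equiv.Perm (ZMod p))) :=
    Equiv.Perm.closure_prime_cycle_swap hcard hcyc hsupp ⟨0, 1, h10.symm, hτ⟩
  refine le_antisymm le_top ?_
  rw [← htop]
  apply Subgroup.closure_le _ |>.mpr
  rintro g (rfl | rfl)
  · exact Subgroup.subset_closure (by simp)
  · exact hmem
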